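/- Suppose (X,d) and (Y,ρ) are bounded metric spaces, each uniformly perfect with constant D ≥ 1, and f : X → Y is an η-quasisymmetric homeomorphism. Let κ > 1 and let (x_i) and (y_i) be sequences of points in X such that ρ(f(x_i),f(y_i)) < d(x_i,y_i)^{1+κ} for all i ∈ ℕ and d(x_i,y_i) → 0 as i → ∞. Then for every 0 < ε₀ < 1 there is 0 < ε < ε₀ such that for every m ∈ ℕ there exist three distinct points a, b, c ∈ X satisfying (1) d(a,b) ≤ 1/m, (2) ε·D^{−1}·d(a,c) < d(a,b) ≤ ε·d(a,c), and (3) ρ(f(a),f(b)) < ε^{1+κ/2}·ρ(f(a),f(c)). -/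

import Mathlib

open Set Metric Filter Topology

noncomputable section

/-- `η : [0,∞) → [0,∞)` is a homeomorphism (expressed for a function `η : ℝ → ℝ`). -/
def IsHomeoOfIci (η : ℝ → ℝ) : Prop :=
  ∃ e : (Set.Ici (0:ℝ)) ≃ₜ (Set.Ici (0:ℝ)), ∀ x : Set.Ici (0:ℝ), (e x : ℝ) = η x

/-- `f` is η-quasisymmetric. -/
def IsQuasisymmetric {X Y : Type*} [MetricSpace X] [MetricSpace Y] (η : ℝ → ℝ)
    (f : X → Y) : Prop :=
  ∀ x y z : X, x ≠ z →
    dist (f x) (f y) / dist (f x) (f z) ≤ η (dist x y / dist x z)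

/-- A metric space is uniformly perfect with constant `D ≥ 1` if
`B(x,r) \ B(x,r/D) ≠ ∅` whenever `X \ B(x,r) ≠ ∅` (closed balls). -/
def UniformlyPerfect (X : Type*) [MetricSpace X] (D : ℝ) : Prop :=
  ∀ (x : X) (r : ℝ), 0 < r → ((Set.univ : Set X) \ closedBall x r).Nonempty →
    (closedBall x r \ closedBall x (r / D)).Nonempty
set_option maxHeartbeats 2000000 in
/-- Lemma 3.3 of the paper: from a sequence of pairs on which an `η`-quasisymmetric map
exhibits a genuine Hölder behaviour one finds, at all small scales, triplets of points
with comparable distances on which the Hölder behaviour persists. -/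
theorem statement3 {X Y : Type*} [MetricSpace X] [MetricSpace Y]
    (hXb : Bornology.IsBounded (Set.univ : Set X))
    (hYb : Bornology.IsBounded (Set.univ : Set Y))
    (D : ℝ) (hD : 1 ≤ D) (hXup : UniformlyPerfect X D) (hYup : UniformlyPerfect Y D)
    (η : ℝ → ℝ) (hη : IsHomeoOfIci η) (f : X ≃ₜ Y) (hf : IsQuasisymmetric η f)
    (κ : ℝ) (hκ : 1 < κ) (x y : ℕ → X)
    (hlt : ∀ i : ℕ, dist (f (x i)) (f (y i)) < dist (x i) (y i) ^ (1 + κ))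
    (hto : Tendsto (fun i => dist (x i) (y i)) atTop (𝓝 0)) :
    ∀ ε₀ : ℝ, 0 < ε₀ → ε₀ < 1 → ∃ ε : ℝ, 0 < ε ∧ ε < ε₀ ∧
      ∀ m : ℕ, 0 < m → ∃ a b c : X, a ≠ b ∧ a ≠ c ∧ b ≠ c ∧
        dist a b ≤ 1 / (m : ℝ) ∧
        ε * D⁻¹ * dist a c < dist a b ∧ dist a b ≤ ε * dist a c ∧
        dist (f a) (f b) < ε ^ (1 + κ / 2) * dist (f a) (f c) := by

  intro ε₀ hε₀ hε₀1
  obtain ⟨e, he⟩ := hη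
  have hηc : ContinuousOn η (Ici (0:ℝ)) := by
    rw [continuousOn_iff_continuous_restrict]
    have hre : (Ici (0:ℝ)).domRestrict η = fun z => ((e z : Ici (0:ℝ)) : ℝ) := by
      funext z
      exact (he z).symm
    rw [hre]
    exact continuous_subtype_val.comp e.continuous
  have hfinj : Function.Injective (f : X → Y) := f.injective
  have hfq : ∀ u v w : X, u ≠ w →
      dist (f u) (f v) ≤ η (dist u v / dist u w) * dist (f u) (f w) := by
    intro u v w huw
    have h1 : 0 < dist (f u) (f w) := dist_pos.mpr fun h => huw (hfinj h)
    exact (div_le_iff₀ h1).mp (hf u v w huw)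
  have hκ0 : (0:ℝ) < κ := by linarith
  have hτ : (0:ℝ) < 1 + κ / 2 := by linarith
  have hD0 : (0:ℝ) < D := by linarith
  have hdall : ∀ i, 0 < dist (x i) (y i) := by
    intro i
    rcases (dist_nonneg : 0 ≤ dist (x i) (y i)).lt_or_eq with h | h
    · exact h
    · exfalso
      have h2 := hlt i
      rw [← h, Real.zero_rpow (by linarith : (0:ℝ) < 1 + κ).ne'] at h2
      exact absurd h2 (not_lt.mpr dist_nonneg)
  have hqex : ∃ q : X, q ≠ x 0 := by
    by_contra h
    push_neg at h
    have h0 := hdall 0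
    rw [h (y 0), h (x 0), dist_self] at h0
    exact lt_irrefl _ h0
  obtain ⟨q, hqp⟩ := hqex
  set p := x 0 with hpdef
  have hΔX : 0 < dist p q := dist_pos.mpr fun hh => hqp hh.symm
  have hΔY : 0 < dist (f p) (f q) := dist_pos.mpr fun hh => hqp (hfinj hh).symm
  obtain ⟨C, hC⟩ := Metric.isBounded_iff.mp hXb
  have hCd : ∀ u v : X, dist u v ≤ C := fun u v => hC (mem_univ u) (mem_univ v)
  have hC0 : 0 < C := lt_of_lt_of_le hΔX (hCd p q)
  have ann : ∀ (z : X) (r : ℝ), 0 < r → r ≤ dist p q / 3 →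
      ∃ w : X, dist z w ≤ r ∧ r / D < dist z w := by
    intro z r hr hr3
    have hne : ((Set.univ : Set X) \ closedBall z r).Nonempty := by
      by_contra hcon
      rw [Set.not_nonempty_iff_eq_empty, Set.diff_eq_empty] at hcon
      have hp1 : dist p z ≤ r := mem_closedBall.mp (hcon (mem_univ p))
      have hq1 : dist q z ≤ r := mem_closedBall.mp (hcon (mem_univ q))
      have h3 := dist_triangle p z q
      rw [dist_comm z q] at h3
      linarith
    obtain ⟨w, hw1, hw2⟩ := hXup z r hr hne
    rw [mem_closedBall] at hw1
    have hw2' : r / D < dist w z := by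
      by_contra hle
      push_neg at hle
      exact hw2 (mem_closedBall.mpr hle)
    exact ⟨w, by rw [dist_comm]; exact hw1, by rw [dist_comm]; exact hw2'⟩
  set ε : ℝ := ε₀ / 2 with hεdef
  have hε : 0 < ε := by rw [hεdef]; linarith
  have hε1 : ε < 1 := by rw [hεdef]; linarith
  refine ⟨ε, hε, by rw [hεdef]; linarith, ?_⟩
  intro m hm
  have hm' : (0:ℝ) < 1 / (m:ℝ) := by
    have : (0:ℝ) < (m:ℝ) := by exact_mod_cast hm
    positivity
  set S : ℝ := min (1/(m:ℝ)) (dist p q / 3) with hSdef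
  have hS : 0 < S := lt_min hm' (by linarith)
  have hSm : S ≤ 1/(m:ℝ) := min_le_left _ _
  have hSΔ : S ≤ dist p q / 3 := min_le_right _ _
  set A : ℝ := max 1 (C * D / S) with hAdef
  have hA1 : (1:ℝ) ≤ A := le_max_left _ _
  obtain ⟨u0, hu0mem, hu0max'⟩ :=
    isCompact_Icc.exists_isMaxOn ⟨0, left_mem_Icc.mpr (by linarith)⟩
      (hηc.mono Icc_subset_Ici_self)
  have hu0max : ∀ u ∈ Icc (0:ℝ) A, η u ≤ η u0 := fun u hu => hu0max' hu
  set E := η u0 with hEdef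
  have hEb : ∀ u : ℝ, 0 ≤ u → u ≤ A → η u ≤ E := fun u h1 h2 => hu0max u (mem_Icc.mpr ⟨h1, h2⟩)
  have hE1 : (1:ℝ) ≤ E := by
    have h1 := hf p q q (fun hh => hqp hh.symm)
    rw [div_self hΔY.ne', div_self hΔX.ne'] at h1
    exact le_trans h1 (hEb 1 zero_le_one hA1)
  have hE0 : (0:ℝ) < E := lt_of_lt_of_le one_pos hE1
  set K1 : ℝ := ε ^ ((1:ℝ) + κ/2) * dist (f p) (f q) / (2 * E * S ^ ((1:ℝ) + κ/2))
    with hK1def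
  have hK1 : 0 < K1 := by
    rw [hK1def]
    have h1 := Real.rpow_pos_of_pos hε ((1:ℝ)+κ/2)
    have h2 := Real.rpow_pos_of_pos hS ((1:ℝ)+κ/2)
    positivity
  set θ : ℝ := min (S / D) ((K1 / E) ^ ((2:ℝ)/κ)) with hθdef
  have hθ : 0 < θ := lt_min (div_pos hS hD0) (Real.rpow_pos_of_pos (div_pos hK1 hE0) _)
  obtain ⟨i, hi0⟩ := (hto.eventually_lt_const hθ).exists
  have hi : dist (x i) (y i) < θ := hi0
  set a := x i with hadef
  set b0 := y i with hbdef
  have hd0 : 0 < dist a b0 := hdall i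
  have hρ : dist (f a) (f b0) < dist a b0 ^ ((1:ℝ) + κ) := hlt i
  have hdθ : dist a b0 < θ := hi
  have hdS : dist a b0 < S / D := lt_of_lt_of_le hdθ (min_le_left _ _)
  have hdK : dist a b0 < (K1 / E) ^ ((2:ℝ)/κ) := lt_of_lt_of_le hdθ (min_le_right _ _)
  obtain ⟨w0, hw01, hw02⟩ := ann a S hS hSΔ
  have hstep0 : ∀ z : X, ∃ w : X, (0 < dist a z ∧ dist a z ≤ S) →
      (ε * dist a z / D < dist a w ∧ dist a w ≤ ε * dist a z) := by
    intro z
    by_cases hz : 0 < dist a z ∧ dist a z ≤ S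
    · have hr1 : 0 < ε * dist a z := mul_pos hε hz.1
      have hr2 : ε * dist a z ≤ dist p q / 3 := by
        have h3 : ε * dist a z ≤ dist a z := mul_le_of_le_one_left hz.1.le hε1.le
        linarith [hz.2]
      obtain ⟨w, hwa, hwb⟩ := ann a (ε * dist a z) hr1 hr2
      exact ⟨w, fun _ => ⟨hwb, hwa⟩⟩
    · exact ⟨z, fun h => absurd h hz⟩
  choose F hF using hstep0
  set c : ℕ → X := fun k => F^[k] w0 with hcdef
  have hc0 : c 0 = w0 := rfl
  have hcs : ∀ k, c (k+1) = F (c k) := fun k => Function.iterate_succ_apply' F k w0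
  have hInv : ∀ k, 0 < dist a (c k) ∧ dist a (c k) ≤ S := by
    intro k
    induction k with
    | zero =>
      rw [hc0]
      exact ⟨lt_trans (div_pos hS hD0) hw02, hw01⟩
    | succ k ih =>
      have h := hF (c k) ih
      rw [hcs k]
      refine ⟨lt_trans (div_pos (mul_pos hε ih.1) hD0) h.1, ?_⟩
      have h3 : ε * dist a (c k) ≤ dist a (c k) := mul_le_of_le_one_left ih.1.le hε1.le
      linarith [h.2, ih.2]
  have hstep : ∀ k, ε * dist a (c k) / D < dist a (c (k+1)) ∧
      dist a (c (k+1)) ≤ ε * dist a (c k) := fun k => by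
    rw [hcs k]; exact hF (c k) (hInv k)
  have hgeo : ∀ k, dist a (c k) ≤ S * ε ^ k := by
    intro k
    induction k with
    | zero => rw [hc0, pow_zero, mul_one]; exact hw01
    | succ k ih =>
      calc dist a (c (k+1)) ≤ ε * dist a (c k) := (hstep k).2
        _ ≤ ε * (S * ε ^ k) := mul_le_mul_of_nonneg_left ih hε.le
        _ = S * ε ^ (k+1) := by ring
  have hexN : ∃ k, dist a (c k) ≤ dist a b0 := by
    obtain ⟨n0, hn0⟩ := exists_pow_lt_of_lt_one (div_pos hd0 hS) hε1
    refine ⟨n0, le_of_lt ?_⟩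
    calc dist a (c n0) ≤ S * ε ^ n0 := hgeo n0
      _ = ε ^ n0 * S := mul_comm _ _
      _ < dist a b0 := (lt_div_iff₀ hS).mp hn0
  classical
  set N := Nat.find hexN with hNdef
  have hNle : dist a (c N) ≤ dist a b0 := Nat.find_spec hexN
  have hNmin : ∀ k, k < N → dist a b0 < dist a (c k) := fun k hk =>
    not_le.mp (Nat.find_min hexN hk)
  have hN0 : N ≠ 0 := by
    intro h
    rw [h, hc0] at hNle
    linarith [hw02, hdS]
  obtain ⟨n, hn⟩ : ∃ n, N = n + 1 := ⟨N - 1, (Nat.succ_pred_eq_of_ne_zero hN0).symm⟩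
  by_contra hcon
  push_neg at hcon
  have hlow : ∀ k, ε ^ ((1:ℝ) + κ / 2) * dist (f a) (f (c k)) ≤ dist (f a) (f (c (k+1))) := by
    intro k
    have h1 := (hstep k).1
    have h2 := (hstep k).2
    have hk1 := (hInv k).1
    have hk2 := (hInv (k+1)).1
    refine hcon a (c (k+1)) (c k) (dist_pos.mp hk2) (dist_pos.mp hk1) ?_ ?_ ?_ h2
    · intro hbc
      rw [hbc] at h2
      have h3 : ε * dist a (c k) < dist a (c k) := by
        nlinarith [mul_pos (by linarith : (0:ℝ) < 1 - ε) hk1]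
      linarith
    · calc dist a (c (k+1)) ≤ S := (hInv (k+1)).2
        _ ≤ 1/(m:ℝ) := hSm
    · calc ε * D⁻¹ * dist a (c k) = ε * dist a (c k) / D := by ring
        _ < dist a (c (k+1)) := h1
  have hQind : ∀ k, (ε ^ ((1:ℝ) + κ/2)) ^ k * dist (f a) (f (c 0)) ≤ dist (f a) (f (c k)) := by
    intro k
    induction k with
    | zero => rw [pow_zero, one_mul]
    | succ k ih =>
      have h := hlow k
      have hnn : (0:ℝ) ≤ ε ^ ((1:ℝ)+κ/2) := (Real.rpow_pos_of_pos hε _).le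
      calc (ε ^ ((1:ℝ)+κ/2)) ^ (k+1) * dist (f a) (f (c 0))
          = ε ^ ((1:ℝ)+κ/2) * ((ε ^ ((1:ℝ)+κ/2)) ^ k * dist (f a) (f (c 0))) := by ring
        _ ≤ ε ^ ((1:ℝ)+κ/2) * dist (f a) (f (c k)) := mul_le_mul_of_nonneg_left ih hnn
        _ ≤ dist (f a) (f (c (k+1))) := h
  have hQN : dist (f a) (f (c N)) ≤ E * dist (f a) (f b0) := by
    have h := hfq a (c N) b0 (dist_pos.mp hd0)
    have harg1 : 0 ≤ dist a (c N) / dist a b0 := div_nonneg dist_nonneg dist_nonneg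
    have harg2 : dist a (c N) / dist a b0 ≤ A :=
      le_trans ((div_le_one hd0).mpr hNle) hA1
    exact le_trans h (mul_le_mul_of_nonneg_right (hEb _ harg1 harg2) dist_nonneg)
  have hwex : ∃ w : X, dist (f p) (f q) / 2 ≤ dist (f a) (f w) := by
    by_cases hcase : dist (f p) (f q) / 2 ≤ dist (f a) (f p)
    · exact ⟨p, hcase⟩
    · push_neg at hcase
      refine ⟨q, ?_⟩
      have htri := dist_triangle (f p) (f a) (f q)
      rw [dist_comm (f p) (f a)] at htri
      linarith
  obtain ⟨w, hw⟩ := hwex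
  have hQ0 : dist (f p) (f q) / (2 * E) ≤ dist (f a) (f (c 0)) := by
    have hac0 : a ≠ c 0 := dist_pos.mp (hInv 0).1
    have h := hfq a w (c 0) hac0
    have hc0ge : S / D ≤ dist a (c 0) := by rw [hc0]; exact hw02.le
    have harg2 : dist a w / dist a (c 0) ≤ A := by
      have h1 : dist a w / dist a (c 0) ≤ C / (S / D) :=
        div_le_div₀ hC0.le (hCd a w) (div_pos hS hD0) hc0ge
      have h2 : C / (S / D) = C * D / S := div_div_eq_mul_div C S D
      rw [h2] at h1
      exact le_trans h1 (le_max_right _ _)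
    have hEarg := hEb _ (div_nonneg dist_nonneg dist_nonneg) harg2
    have h2 : dist (f p) (f q) / 2 ≤ E * dist (f a) (f (c 0)) :=
      le_trans hw (le_trans h (mul_le_mul_of_nonneg_right hEarg dist_nonneg))
    rw [div_le_iff₀ (by positivity : (0:ℝ) < 2 * E)]
    calc dist (f p) (f q) = 2 * (dist (f p) (f q) / 2) := by ring
      _ ≤ 2 * (E * dist (f a) (f (c 0))) := by linarith
      _ = dist (f a) (f (c 0)) * (2 * E) := by ring
  have hεn : dist a b0 / S < ε ^ n := by
    rw [div_lt_iff₀ hS]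
    calc dist a b0 < dist a (c n) := hNmin n (by omega)
      _ ≤ S * ε ^ n := hgeo n
      _ = ε ^ n * S := mul_comm _ _
  have hrpow1 : (dist a b0 / S) ^ ((1:ℝ) + κ/2) ≤ (ε ^ ((1:ℝ) + κ/2)) ^ n := by
    have h1 : (dist a b0 / S) ^ ((1:ℝ)+κ/2) ≤ ((ε:ℝ) ^ n) ^ ((1:ℝ)+κ/2) :=
      Real.rpow_le_rpow (div_nonneg dist_nonneg hS.le) hεn.le hτ.le
    have h2 : ((ε:ℝ) ^ n) ^ ((1:ℝ)+κ/2) = (ε ^ ((1:ℝ)+κ/2)) ^ n := by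
      rw [← Real.rpow_natCast ε n, ← Real.rpow_natCast (ε ^ ((1:ℝ)+κ/2)) n,
        ← Real.rpow_mul hε.le, ← Real.rpow_mul hε.le,
        mul_comm ((n:ℕ):ℝ) ((1:ℝ)+κ/2)]
    rw [h2] at h1
    exact h1
  have hmain : ε ^ ((1:ℝ)+κ/2) * ((dist a b0 / S) ^ ((1:ℝ)+κ/2) * (dist (f p) (f q) / (2*E)))
      ≤ dist (f a) (f (c N)) := by
    have hnn : (0:ℝ) ≤ ε ^ ((1:ℝ)+κ/2) := (Real.rpow_pos_of_pos hε _).le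
    have t1 : (dist a b0 / S) ^ ((1:ℝ)+κ/2) * (dist (f p) (f q) / (2*E))
        ≤ (ε ^ ((1:ℝ)+κ/2)) ^ n * dist (f a) (f (c 0)) :=
      mul_le_mul hrpow1 hQ0 (div_nonneg hΔY.le (by linarith)) (pow_nonneg hnn n)
    calc ε ^ ((1:ℝ)+κ/2) * ((dist a b0 / S) ^ ((1:ℝ)+κ/2) * (dist (f p) (f q) / (2*E)))
        ≤ ε ^ ((1:ℝ)+κ/2) * ((ε ^ ((1:ℝ)+κ/2)) ^ n * dist (f a) (f (c 0))) :=
          mul_le_mul_of_nonneg_left t1 hnn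
      _ = (ε ^ ((1:ℝ)+κ/2)) ^ N * dist (f a) (f (c 0)) := by rw [hn]; ring
      _ ≤ dist (f a) (f (c N)) := hQind N
  have hup : dist (f a) (f (c N)) < E * dist a b0 ^ ((1:ℝ) + κ) :=
    lt_of_le_of_lt hQN ((mul_lt_mul_iff_right₀ hE0).mpr hρ)
  have h3 : ε ^ ((1:ℝ)+κ/2) * ((dist a b0 / S) ^ ((1:ℝ)+κ/2) * (dist (f p) (f q) / (2*E)))
      < E * dist a b0 ^ ((1:ℝ)+κ) := lt_of_le_of_lt hmain hup
  have e1 : ε ^ ((1:ℝ)+κ/2) * ((dist a b0 / S) ^ ((1:ℝ)+κ/2) * (dist (f p) (f q) / (2*E)))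
      = K1 * dist a b0 ^ ((1:ℝ)+κ/2) := by
    rw [hK1def, Real.div_rpow dist_nonneg hS.le]
    ring
  have e2 : E * dist a b0 ^ ((1:ℝ)+κ)
      = E * dist a b0 ^ (κ/2) * dist a b0 ^ ((1:ℝ)+κ/2) := by
    rw [show (1:ℝ)+κ = κ/2 + ((1:ℝ)+κ/2) by ring, Real.rpow_add hd0]
    ring
  rw [e1, e2] at h3
  have hK1lt : K1 < E * dist a b0 ^ (κ/2) :=
    (mul_lt_mul_iff_left₀ (Real.rpow_pos_of_pos hd0 _)).mp h3
  have hcontra : E * dist a b0 ^ (κ/2) < K1 := by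
    have h1 : dist a b0 ^ (κ/2) < ((K1/E) ^ ((2:ℝ)/κ)) ^ (κ/2) :=
      Real.rpow_lt_rpow dist_nonneg hdK (by linarith)
    have h2 : ((K1/E) ^ ((2:ℝ)/κ)) ^ (κ/2) = K1 / E := by
      rw [← Real.rpow_mul (div_pos hK1 hE0).le]
      rw [show ((2:ℝ)/κ) * (κ/2) = 1 by field_simp]
      exact Real.rpow_one _
    rw [h2] at h1
    calc E * dist a b0 ^ (κ/2) < E * (K1/E) := (mul_lt_mul_iff_right₀ hE0).mpr h1
      _ = K1 := by field_simp
  linarith
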